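/- Let r > 1/2 and let z_n > 0 with y_n = 1/z_n satisfying y_n ≤ n − n^r eventually. Then χ_{z_n}^{(n)} ∼ y_n^{1−n} e^{y_n} Γ(n) as n → ∞. -/

import Mathlib

open Finset Filter

/-- `c_N^{(n)} = (n-1)!/(n-1-N)!`, the number of `N`-step self-avoiding walks on `K_n`. -/
noncomputable def sawCount (n N : ℕ) : ℝ :=
  (Nat.factorial (n - 1) : ℝ) / (Nat.factorial (n - 1 - N) : ℝ)

/-- The susceptibility `χ_z^{(n)} = ∑_{N=0}^{n-1} c_N^{(n)} z^N`. -/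
noncomputable def chi (n : ℕ) (z : ℝ) : ℝ :=
  ∑ N ∈ Finset.range n, sawCount n N * z ^ N

/-- Partial sums of the exponential series converge to `exp`. -/
lemma expPartial_tendsto (x : ℝ) :
    Tendsto (fun m : ℕ => ∑ i ∈ Finset.range m, x ^ i / (Nat.factorial i : ℝ))
      atTop (nhds (Real.exp x)) := by
  have h := (NormedSpace.exp_series_hasSum_exp' (𝕂 := ℝ) x).tendsto_sum_nat
  rw [← congrFun Real.exp_eq_exp_ℝ x] at h
  refine h.congr (fun m => Finset.sum_congr rfl fun i _ => ?_)
  rw [smul_eq_mul, div_eq_inv_mul]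

/-- Second-order bound: `(1-δ) e^δ ≤ 1 - δ²/2` for `δ ≥ 0`. -/
lemma key_ineq {δ : ℝ} (h0 : 0 ≤ δ) : (1 - δ) * Real.exp δ ≤ 1 - δ ^ 2 / 2 := by
  set f : ℝ → ℝ := fun x => (1 - x) * Real.exp x + x ^ 2 / 2 with hf
  have hd : ∀ x : ℝ, HasDerivAt f (x * (1 - Real.exp x)) x := by
    intro x
    have h1 : HasDerivAt (fun x : ℝ => (1 - x) * Real.exp x)
        ((0 - 1) * Real.exp x + (1 - x) * Real.exp x) x :=
      ((hasDerivAt_const x (1 : ℝ)).sub (hasDerivAt_id x)).mul (Real.hasDerivAt_exp x)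
    have h2 : HasDerivAt (fun x : ℝ => x ^ 2 / 2) (((2 : ℕ) * x ^ (2 - 1)) / 2) x :=
      (hasDerivAt_pow 2 x).div_const 2
    have h3 := h1.add h2
    refine h3.congr_deriv ?_
    push_cast
    ring
  have hanti : AntitoneOn f (Set.Ici (0 : ℝ)) := by
    apply antitoneOn_of_deriv_nonpos (convex_Ici 0)
    · exact Continuous.continuousOn (by continuity)
    · intro x _
      exact (hd x).differentiableAt.differentiableWithinAt
    · intro x hx
      rw [interior_Ici] at hx
      rw [(hd x).deriv]
      have hx0 : (0 : ℝ) < x := hx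
      have he : (1 : ℝ) ≤ Real.exp x := Real.one_le_exp hx0.le
      exact mul_nonpos_of_nonneg_of_nonpos hx0.le (by linarith)
  have hle := hanti Set.self_mem_Ici (Set.mem_Ici.mpr h0) h0
  simp only [hf, sub_zero, Real.exp_zero, mul_one] at hle
  nlinarith [hle]

/-- `t^n e^{(1-t)n} ≤ e^{-n(1-t)²/2}` for `0 ≤ t ≤ 1`. -/
lemma pow_bound {t : ℝ} (h0 : 0 ≤ t) (h1 : t ≤ 1) (n : ℕ) :
    t ^ n * Real.exp ((1 - t) * n) ≤ Real.exp (-((n : ℝ) * (1 - t) ^ 2 / 2)) := by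
  have hk := key_ineq (δ := 1 - t) (by linarith)
  have h2 : t * Real.exp (1 - t) ≤ Real.exp (-((1 - t) ^ 2 / 2)) := by
    have hexp : 1 - (1 - t) ^ 2 / 2 ≤ Real.exp (-((1 - t) ^ 2 / 2)) := by
      have := Real.add_one_le_exp (-((1 - t) ^ 2 / 2))
      linarith
    have heq : t * Real.exp (1 - t) = (1 - (1 - t)) * Real.exp (1 - t) := by ring_nf
    rw [heq]
    exact hk.trans hexp
  have hnn : 0 ≤ t * Real.exp (1 - t) := by positivity
  calc t ^ n * Real.exp ((1 - t) * n)
      = (t * Real.exp (1 - t)) ^ n := by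
        rw [mul_pow, ← Real.exp_nat_mul, mul_comm (n : ℝ) (1 - t)]
    _ ≤ (Real.exp (-((1 - t) ^ 2 / 2))) ^ n := pow_le_pow_left₀ hnn h2 n
    _ = Real.exp (-((n : ℝ) * (1 - t) ^ 2 / 2)) := by
        rw [← Real.exp_nat_mul]
        ring_nf

/-- Rewriting `chi` at `z = 1/y`. -/
lemma chi_eq (n : ℕ) (hn : 1 ≤ n) {y : ℝ} (hy : 0 < y) :
    chi n (1 / y) = y ^ (1 - (n : ℤ)) * (Nat.factorial (n - 1) : ℝ) *
      ∑ k ∈ Finset.range n, y ^ k / (Nat.factorial k : ℝ) := by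
  have hy0 : y ≠ 0 := hy.ne'
  unfold chi sawCount
  rw [Finset.mul_sum,
    ← Finset.sum_range_reflect
      (fun k => y ^ (1 - (n : ℤ)) * (Nat.factorial (n - 1) : ℝ) *
        (y ^ k / (Nat.factorial k : ℝ))) n]
  refine Finset.sum_congr rfl fun N hN => ?_
  have hNn : N < n := Finset.mem_range.mp hN
  have h1 : (1 / y) ^ N = y ^ (-(N : ℤ)) := by
    rw [zpow_neg, zpow_natCast, one_div, inv_pow]
  have h2 : y ^ (n - 1 - N) = y ^ ((n : ℤ) - 1 - N) := by
    rw [← zpow_natCast]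
    congr 1
    omega
  have h3 : y ^ ((1 : ℤ) - n) * y ^ ((n : ℤ) - 1 - N) = y ^ (-(N : ℤ)) := by
    rw [← zpow_add₀ hy0]
    congr 1
    ring
  rw [h1, h2, ← h3]
  ring

lemma ratio_eq (n : ℕ) (hn : 1 ≤ n) {y : ℝ} (hy : 0 < y) :
    chi n (1 / y) / (y ^ (1 - (n : ℤ)) * Real.exp y * (Nat.factorial (n - 1) : ℝ)) =
      (∑ k ∈ Finset.range n, y ^ k / (Nat.factorial k : ℝ)) / Real.exp y := by
  rw [chi_eq n hn hy]
  have h1 : y ^ (1 - (n : ℤ)) ≠ 0 := zpow_ne_zero _ hy.ne'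
  have h2 : (Nat.factorial (n - 1) : ℝ) ≠ 0 :=
    Nat.cast_ne_zero.mpr (Nat.factorial_ne_zero _)
  have h3 : Real.exp y ≠ 0 := (Real.exp_pos y).ne'
  field_simp

/-- Geometric-type tail bound for the exponential series. -/
lemma tail_bound {y : ℝ} (hy : 0 < y) {n : ℕ} (hyn : y < n) :
    Real.exp y - ∑ k ∈ Finset.range n, y ^ k / (Nat.factorial k : ℝ) ≤
      y ^ n / (Nat.factorial n : ℝ) * ((n : ℝ) / ((n : ℝ) - y)) := by
  have hn0 : 0 < (n : ℝ) := lt_trans hy hyn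
  have hny : 0 < (n : ℝ) - y := by linarith
  set q : ℝ := y / n with hqdef
  have hq0 : 0 ≤ q := by positivity
  have hq1 : q < 1 := (div_lt_one hn0).mpr hyn
  set S : ℝ := ∑ k ∈ Finset.range n, y ^ k / (Nat.factorial k : ℝ) with hS
  set C : ℝ := y ^ n / (Nat.factorial n : ℝ) * (1 / (1 - q)) with hC
  have hterm : ∀ k : ℕ, y ^ (n + k) / (Nat.factorial (n + k) : ℝ) ≤
      y ^ n / (Nat.factorial n : ℝ) * q ^ k := by
    intro k
    have hfac : ((Nat.factorial n : ℝ) * (n : ℝ) ^ k) ≤ (Nat.factorial (n + k) : ℝ) := by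
      have h1 : Nat.factorial n * n ^ k ≤ Nat.factorial n * (n + 1) ^ k :=
        Nat.mul_le_mul_left _ (Nat.pow_le_pow_left (Nat.le_succ n) k)
      have h2 := Nat.factorial_mul_pow_le_factorial (m := n) (n := k)
      exact_mod_cast le_trans h1 h2
    have hpos : (0 : ℝ) < (Nat.factorial n : ℝ) * (n : ℝ) ^ k := by positivity
    have hypow : (0 : ℝ) ≤ y ^ (n + k) := by positivity
    calc y ^ (n + k) / (Nat.factorial (n + k) : ℝ)
        ≤ y ^ (n + k) / ((Nat.factorial n : ℝ) * (n : ℝ) ^ k) :=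
          div_le_div_of_nonneg_left hypow hpos hfac
      _ = y ^ n / (Nat.factorial n : ℝ) * q ^ k := by
          rw [pow_add, hqdef, div_pow]
          field_simp
  have hgeom : ∀ j : ℕ, ∑ k ∈ Finset.range j, q ^ k ≤ 1 / (1 - q) := by
    intro j
    rw [geom_sum_eq hq1.ne]
    have hqj : (0 : ℝ) ≤ q ^ j := by positivity
    have h1q : (0 : ℝ) < 1 - q := by linarith
    have heq : (q ^ j - 1) / (q - 1) = (1 - q ^ j) / (1 - q) := by
      rw [div_eq_div_iff (sub_ne_zero.mpr hq1.ne) (sub_ne_zero.mpr hq1.ne')]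
      ring
    rw [heq]
    gcongr
    · linarith
  have hpartial : ∀ m : ℕ, ∑ k ∈ Finset.range m, y ^ k / (Nat.factorial k : ℝ) ≤ S + C := by
    intro m
    have hmono : ∑ k ∈ Finset.range m, y ^ k / (Nat.factorial k : ℝ) ≤
        ∑ k ∈ Finset.range (n + m), y ^ k / (Nat.factorial k : ℝ) := by
      apply Finset.sum_le_sum_of_subset_of_nonneg
      · exact Finset.range_subset_range.mpr (by omega)
      · intro i _ _; positivity
    refine hmono.trans ?_
    rw [Finset.sum_range_add]
    have htail : ∑ k ∈ Finset.range m, y ^ (n + k) / (Nat.factorial (n + k) : ℝ) ≤ C := by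
      calc ∑ k ∈ Finset.range m, y ^ (n + k) / (Nat.factorial (n + k) : ℝ)
          ≤ ∑ k ∈ Finset.range m, y ^ n / (Nat.factorial n : ℝ) * q ^ k :=
            Finset.sum_le_sum fun k _ => hterm k
        _ = y ^ n / (Nat.factorial n : ℝ) * ∑ k ∈ Finset.range m, q ^ k := by
            rw [Finset.mul_sum]
        _ ≤ C := by
            rw [hC]
            have hnn : (0 : ℝ) ≤ y ^ n / (Nat.factorial n : ℝ) := by positivity
            exact mul_le_mul_of_nonneg_left (hgeom m) hnn
    linarith [htail]
  have hexp_le : Real.exp y ≤ S + C :=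
    le_of_tendsto (expPartial_tendsto y) (Filter.Eventually.of_forall hpartial)
  have hCeq : C = y ^ n / (Nat.factorial n : ℝ) * ((n : ℝ) / ((n : ℝ) - y)) := by
    rw [hC, hqdef, one_sub_div hn0.ne', one_div, inv_div]
  rw [← hCeq]
  linarith

theorem chi_supercritical (r : ℝ) (hr : 1 / 2 < r) (y : ℕ → ℝ)
    (hypos : ∀ n, 0 < y n)
    (hy : ∀ᶠ n : ℕ in atTop, y n ≤ (n : ℝ) - (n : ℝ) ^ r) :
    Tendsto
      (fun n : ℕ =>
        chi n (1 / y n) /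
          (y n ^ (1 - (n : ℤ)) * Real.exp (y n) * (Nat.factorial (n - 1) : ℝ)))
      atTop (nhds 1) := by
  have hs : 0 < 2 * r - 1 := by linarith
  set B : ℕ → ℝ := fun n => (n : ℝ) ^ (1 - r) * Real.exp (-((n : ℝ) ^ (2 * r - 1) / 2))
    with hB
  have hBtendsto : Tendsto B atTop (nhds 0) := by
    have h1 : Tendsto (fun x : ℝ => x ^ ((1 - r) / (2 * r - 1)) * Real.exp (-(1 / 2) * x))
        atTop (nhds 0) :=
      tendsto_rpow_mul_exp_neg_mul_atTop_nhds_zero _ _ (by norm_num)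
    have h2 : Tendsto (fun n : ℕ => (n : ℝ) ^ (2 * r - 1)) atTop atTop :=
      (tendsto_rpow_atTop hs).comp tendsto_natCast_atTop_atTop
    refine (h1.comp h2).congr' ?_
    filter_upwards [eventually_ge_atTop 1] with n hn
    have hn0 : (0 : ℝ) < (n : ℝ) := by exact_mod_cast Nat.lt_of_lt_of_le Nat.zero_lt_one hn
    simp only [Function.comp_apply, hB]
    have hpow : ((n : ℝ) ^ (2 * r - 1)) ^ ((1 - r) / (2 * r - 1)) = (n : ℝ) ^ (1 - r) := by
      rw [← Real.rpow_mul hn0.le]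
      congr 1
      field_simp
    rw [hpow]
    congr 1
    congr 1
    ring
  apply tendsto_of_tendsto_of_tendsto_of_le_of_le' (g := fun n => 1 - B n)
    (h := fun _ : ℕ => (1 : ℝ))
  · simpa using tendsto_const_nhds.sub hBtendsto
  · exact tendsto_const_nhds
  · -- lower bound
    filter_upwards [hy, eventually_ge_atTop 1] with n hyn hn1
    have hyp := hypos n
    have hn0 : (0 : ℝ) < (n : ℝ) := by exact_mod_cast Nat.lt_of_lt_of_le Nat.zero_lt_one hn1
    have hnr : (0 : ℝ) < (n : ℝ) ^ r := Real.rpow_pos_of_pos hn0 r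
    have hlt : y n < n := by linarith
    have hny : (n : ℝ) ^ r ≤ (n : ℝ) - y n := by linarith
    have hEpos := Real.exp_pos (y n)
    rw [ratio_eq n hn1 hyp]
    set S : ℝ := ∑ k ∈ Finset.range n, y n ^ k / (Nat.factorial k : ℝ) with hSdef
    set t : ℝ := y n / (n : ℝ) with ht
    have ht0 : 0 ≤ t := by positivity
    have ht1 : t ≤ 1 := by rw [ht, div_le_one hn0]; linarith
    have hA : y n ^ n / (Nat.factorial n : ℝ) ≤ t ^ n * Real.exp n := by
      have hnn : ((n : ℝ)) ^ n / (Nat.factorial n : ℝ) ≤ Real.exp n := by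
        have hsum := Real.sum_le_exp_of_nonneg (x := (n : ℝ)) hn0.le (n + 1)
        have hone : ((n : ℝ)) ^ n / (Nat.factorial n : ℝ) ≤
            ∑ i ∈ Finset.range (n + 1), (n : ℝ) ^ i / (Nat.factorial i : ℝ) :=
          Finset.single_le_sum (f := fun i => ((n : ℝ)) ^ i / (Nat.factorial i : ℝ))
            (fun i _ => by positivity) (Finset.self_mem_range_succ n)
        linarith
      have heq : y n ^ n / (Nat.factorial n : ℝ) =
          t ^ n * (((n : ℝ)) ^ n / (Nat.factorial n : ℝ)) := by
        rw [ht, div_pow]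
        field_simp
      rw [heq]
      exact mul_le_mul_of_nonneg_left hnn (by positivity)
    have hF : (n : ℝ) / ((n : ℝ) - y n) ≤ (n : ℝ) ^ (1 - r) := by
      have h1 : (n : ℝ) / ((n : ℝ) - y n) ≤ (n : ℝ) / (n : ℝ) ^ r :=
        div_le_div_of_nonneg_left hn0.le hnr hny
      have h2 : (n : ℝ) / (n : ℝ) ^ r = (n : ℝ) ^ (1 - r) := by
        rw [Real.rpow_sub hn0, Real.rpow_one]
      linarith [h2 ▸ h1]
    have hP : t ^ n * Real.exp ((n : ℝ) - y n) ≤ Real.exp (-((n : ℝ) ^ (2 * r - 1) / 2)) := by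
      have heq : (1 - t) * (n : ℝ) = (n : ℝ) - y n := by
        rw [ht]
        field_simp
      have h1 := pow_bound ht0 ht1 n
      rw [heq] at h1
      refine h1.trans (Real.exp_le_exp.mpr ?_)
      have h3 : (n : ℝ) * (1 - t) ^ 2 = ((n : ℝ) - y n) ^ 2 / (n : ℝ) := by
        rw [ht]
        field_simp
      have h5 : ((n : ℝ) ^ r) ^ 2 = (n : ℝ) ^ (2 * r) := by
        rw [← Real.rpow_natCast ((n : ℝ) ^ r) 2, ← Real.rpow_mul hn0.le]
        norm_num
        ring_nf
      have h6 : (n : ℝ) ^ (2 * r - 1) = (n : ℝ) ^ (2 * r) / (n : ℝ) := by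
        rw [Real.rpow_sub hn0, Real.rpow_one]
      have H : (n : ℝ) ^ (2 * r - 1) ≤ (n : ℝ) * (1 - t) ^ 2 := by
        rw [h6, h3]
        gcongr
        rw [← h5]
        nlinarith [hnr, hny]
      linarith
    have htail := tail_bound hyp hlt
    have step1 : Real.exp (y n) - S ≤ (t ^ n * Real.exp n) * ((n : ℝ) ^ (1 - r)) := by
      refine htail.trans ?_
      apply mul_le_mul hA hF (div_nonneg hn0.le (by linarith)) (by positivity)
    have step2 : (t ^ n * Real.exp n) * ((n : ℝ) ^ (1 - r)) ≤ B n * Real.exp (y n) := by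
      have heq2 : (t ^ n * Real.exp n) * ((n : ℝ) ^ (1 - r)) =
          (t ^ n * Real.exp ((n : ℝ) - y n)) * Real.exp (y n) * ((n : ℝ) ^ (1 - r)) := by
        have hsplit : Real.exp ((n : ℝ)) = Real.exp ((n : ℝ) - y n) * Real.exp (y n) := by
          rw [← Real.exp_add]
          ring_nf
        rw [hsplit]
        ring
      rw [heq2]
      calc (t ^ n * Real.exp ((n : ℝ) - y n)) * Real.exp (y n) * ((n : ℝ) ^ (1 - r))
          ≤ Real.exp (-((n : ℝ) ^ (2 * r - 1) / 2)) * Real.exp (y n) * ((n : ℝ) ^ (1 - r)) := by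
            gcongr
        _ = B n * Real.exp (y n) := by
            simp only [hB]
            ring
    have hkey : Real.exp (y n) - S ≤ B n * Real.exp (y n) := step1.trans step2
    rw [le_div_iff₀ hEpos]
    nlinarith [hkey]
  · -- upper bound
    filter_upwards [hy, eventually_ge_atTop 1] with n hyn hn1
    have hyp := hypos n
    rw [ratio_eq n hn1 hyp]
    exact (div_le_one (Real.exp_pos _)).mpr (Real.sum_le_exp_of_nonneg hyp.le n)
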